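/- arXiv:2305.00977 — 4 statements merged into one kernel-verified Lean document; each statement's English description precedes it below -/
import Mathlib

section
/- Let R_1, ..., R_n be real random variables with 0 ≤ R_j ≤ 1, adapted to a filtration σ_1 ⊆ ... ⊆ σ_n (R_j is σ_j-measurable). Let V̂ = (1/n) Σ_j R_j and V = (1/n) Σ_j E[R_j | σ_{j-1}]. Then for every t > 0, Pr{V > 2V̂ + t} ≤ e^{-nt/e}. -/
open MeasureTheory Finset

private lemma mmb_exp_bound (x : ℝ) (h0 : 0 ≤ x) (h1 : x ≤ 1) :
    Real.exp (-x) ≤ 1 + (Real.exp (-1) - 1) * x := by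
  have h := convexOn_exp.2 (Set.mem_univ (0 : ℝ)) (Set.mem_univ (-1 : ℝ))
    (by linarith : (0:ℝ) ≤ 1 - x) h0 (by ring)
  simp only [smul_eq_mul, mul_zero, mul_neg, mul_one, zero_add, Real.exp_zero] at h
  nlinarith [h]

private lemma mmb_ei_le_half : Real.exp (-1) ≤ 1 / 2 := by
  have h2 : (2:ℝ) ≤ Real.exp 1 := by nlinarith [Real.add_one_le_exp (1:ℝ)]
  rw [Real.exp_neg]
  rw [inv_le_comm₀ (Real.exp_pos 1) (by norm_num)]
  linarith

private theorem mmb_main {Ω : Type*} [m0 : MeasurableSpace Ω] (μ : Measure Ω)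
    [IsProbabilityMeasure μ]
    (n : ℕ) (𝔉 : ℕ → MeasurableSpace Ω)
    (hmono : Monotone 𝔉) (hle : ∀ j, 𝔉 j ≤ m0)
    (R : ℕ → Ω → ℝ)
    (hmeas : ∀ j ∈ Finset.Icc 1 n, Measurable[𝔉 j] (R j))
    (hbd : ∀ j ∈ Finset.Icc 1 n, ∀ ω, 0 ≤ R j ω ∧ R j ω ≤ 1) :
    ∀ k, k ≤ n →
      Integrable (fun ω => Real.exp (∑ j ∈ Finset.Icc 1 k,
        ((1 - Real.exp (-1)) * (μ[R j | 𝔉 (j - 1)]) ω - R j ω))) μ ∧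
      ∫ ω, Real.exp (∑ j ∈ Finset.Icc 1 k,
        ((1 - Real.exp (-1)) * (μ[R j | 𝔉 (j - 1)]) ω - R j ω)) ∂μ ≤ 1 := by
  have hRint : ∀ j ∈ Finset.Icc 1 n, Integrable (R j) μ := by
    intro j hj
    refine Integrable.mono' (integrable_const 1)
      (((hmeas j hj).mono (hle j) le_rfl).aestronglyMeasurable)
      (ae_of_all _ fun ω => ?_)
    rw [Real.norm_eq_abs, abs_le]
    exact ⟨by linarith [(hbd j hj ω).1], (hbd j hj ω).2⟩
  have hEae : ∀ j ∈ Finset.Icc 1 n, ∀ᵐ ω ∂μ,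
      0 ≤ (μ[R j | 𝔉 (j - 1)]) ω ∧ (μ[R j | 𝔉 (j - 1)]) ω ≤ 1 := by
    intro j hj
    have h0 := condExp_nonneg (μ := μ) (m := 𝔉 (j - 1)) (f := R j)
      (ae_of_all _ fun ω => (hbd j hj ω).1)
    have h1 : μ[R j | 𝔉 (j - 1)] ≤ᵐ[μ] fun _ => (1:ℝ) := by
      have := condExp_mono (m := 𝔉 (j - 1)) (hRint j hj) (integrable_const 1)
        (ae_of_all _ fun ω => (hbd j hj ω).2)
      rwa [condExp_const (hle _)] at this
    filter_upwards [h0, h1] with ω a b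
    exact ⟨a, b⟩
  have hEall : ∀ᵐ ω ∂μ, ∀ j ∈ Finset.Icc 1 n,
      0 ≤ (μ[R j | 𝔉 (j - 1)]) ω ∧ (μ[R j | 𝔉 (j - 1)]) ω ≤ 1 := by
    rw [Filter.eventually_all_finset]
    exact hEae
  have hZmeas : ∀ k, k ≤ n → Measurable[𝔉 k] (fun ω => Real.exp (∑ j ∈ Finset.Icc 1 k,
      ((1 - Real.exp (-1)) * (μ[R j | 𝔉 (j - 1)]) ω - R j ω))) := by
    intro k hk
    apply Measurable.exp
    apply Finset.measurable_sum
    intro j hj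
    rw [Finset.mem_Icc] at hj
    have hj' : j ∈ Finset.Icc 1 n := Finset.mem_Icc.mpr ⟨hj.1, hj.2.trans hk⟩
    have h1 : Measurable[𝔉 k] (μ[R j | 𝔉 (j - 1)]) :=
      (stronglyMeasurable_condExp.measurable).mono
        (hmono ((Nat.sub_le j 1).trans hj.2)) le_rfl
    exact (measurable_const.mul h1).sub ((hmeas j hj').mono (hmono hj.2) le_rfl)
  have hZbd : ∀ k, k ≤ n → ∀ᵐ ω ∂μ, ‖Real.exp (∑ j ∈ Finset.Icc 1 k,
      ((1 - Real.exp (-1)) * (μ[R j | 𝔉 (j - 1)]) ω - R j ω))‖ ≤ Real.exp n := by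
    intro k hk
    filter_upwards [hEall] with ω hω
    rw [Real.norm_eq_abs, abs_of_pos (Real.exp_pos _), Real.exp_le_exp]
    calc ∑ j ∈ Finset.Icc 1 k, ((1 - Real.exp (-1)) * (μ[R j | 𝔉 (j - 1)]) ω - R j ω)
        ≤ ∑ _j ∈ Finset.Icc 1 k, (1:ℝ) := by
          apply Finset.sum_le_sum
          intro j hj
          rw [Finset.mem_Icc] at hj
          have hj' : j ∈ Finset.Icc 1 n := Finset.mem_Icc.mpr ⟨hj.1, hj.2.trans hk⟩
          have hE := hω j hj'
          have hR := (hbd j hj' ω).1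
          nlinarith [Real.exp_nonneg (-1:ℝ), hE.1, hE.2]
      _ ≤ (n:ℝ) := by
          simp only [Finset.sum_const, Nat.card_Icc, Nat.add_sub_cancel, nsmul_eq_mul, mul_one]
          exact_mod_cast hk
  have hZint : ∀ k, k ≤ n → Integrable (fun ω => Real.exp (∑ j ∈ Finset.Icc 1 k,
      ((1 - Real.exp (-1)) * (μ[R j | 𝔉 (j - 1)]) ω - R j ω))) μ := by
    intro k hk
    exact Integrable.mono' (integrable_const (Real.exp n))
      (((hZmeas k hk).mono (hle k) le_rfl).aestronglyMeasurable) (hZbd k hk)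
  intro k
  induction k with
  | zero =>
    intro _
    have he : Finset.Icc 1 0 = (∅ : Finset ℕ) := by decide
    simp [he]
  | succ k ih =>
    intro hk1
    have hk : k ≤ n := Nat.le_of_succ_le hk1
    have hk1' : k + 1 ∈ Finset.Icc 1 n := Finset.mem_Icc.mpr ⟨Nat.succ_le_succ (Nat.zero_le _), hk1⟩
    refine ⟨hZint _ hk1, ?_⟩
    have hsplit : (fun ω => Real.exp (∑ j ∈ Finset.Icc 1 (k+1),
        ((1 - Real.exp (-1)) * (μ[R j | 𝔉 (j - 1)]) ω - R j ω)))
        = (fun ω => Real.exp (∑ j ∈ Finset.Icc 1 k,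
            ((1 - Real.exp (-1)) * (μ[R j | 𝔉 (j - 1)]) ω - R j ω))
            * Real.exp ((1 - Real.exp (-1)) * (μ[R (k+1) | 𝔉 k]) ω))
          * (fun ω => Real.exp (-(R (k+1) ω))) := by
      funext ω
      rw [Pi.mul_apply]
      rw [Finset.sum_Icc_succ_top (Nat.succ_le_succ (Nat.zero_le k))]
      have hkk : k + 1 - 1 = k := by omega
      rw [hkk, ← Real.exp_add, ← Real.exp_add]
      congr 1
      ring
    have hfmeas : Measurable[𝔉 k] (fun ω => Real.exp (∑ j ∈ Finset.Icc 1 k,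
        ((1 - Real.exp (-1)) * (μ[R j | 𝔉 (j - 1)]) ω - R j ω))
        * Real.exp ((1 - Real.exp (-1)) * (μ[R (k+1) | 𝔉 k]) ω)) :=
      (hZmeas k hk).mul
        (Measurable.exp (measurable_const.mul stronglyMeasurable_condExp.measurable))
    have hgint : Integrable (fun ω => Real.exp (-(R (k+1) ω))) μ := by
      refine Integrable.mono' (integrable_const 1)
        ((((hmeas (k+1) hk1').mono (hle _) le_rfl).neg.exp).aestronglyMeasurable)
        (ae_of_all _ fun ω => ?_)
      rw [Real.norm_eq_abs, abs_of_pos (Real.exp_pos _)]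
      rw [show (1:ℝ) = Real.exp 0 by simp]
      exact Real.exp_le_exp.mpr (by linarith [(hbd _ hk1' ω).1])
    have hfgint : Integrable ((fun ω => Real.exp (∑ j ∈ Finset.Icc 1 k,
        ((1 - Real.exp (-1)) * (μ[R j | 𝔉 (j - 1)]) ω - R j ω))
        * Real.exp ((1 - Real.exp (-1)) * (μ[R (k+1) | 𝔉 k]) ω))
        * (fun ω => Real.exp (-(R (k+1) ω)))) μ := by
      rw [← hsplit]
      exact hZint _ hk1
    have hpull := condExp_mul_of_stronglyMeasurable_left (m := 𝔉 k) (μ := μ)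
      hfmeas.stronglyMeasurable hfgint hgint
    have hineq1 : (fun ω => Real.exp (-(R (k+1) ω))) ≤ᵐ[μ]
        fun ω => 1 + (Real.exp (-1) - 1) * R (k+1) ω :=
      ae_of_all _ fun ω => mmb_exp_bound _ (hbd _ hk1' ω).1 (hbd _ hk1' ω).2
    have h1int : Integrable (fun ω => 1 + (Real.exp (-1) - 1) * R (k+1) ω) μ :=
      (integrable_const 1).add ((hRint _ hk1').const_mul _)
    have hmono1 := condExp_mono (m := 𝔉 k) hgint h1int hineq1
    have hcomp : μ[(fun ω => 1 + (Real.exp (-1) - 1) * R (k+1) ω) | 𝔉 k] =ᵐ[μ]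
        fun ω => 1 + (Real.exp (-1) - 1) * (μ[R (k+1) | 𝔉 k]) ω := by
      have heq : (fun ω => 1 + (Real.exp (-1) - 1) * R (k+1) ω)
          = (fun _ => (1:ℝ)) + (Real.exp (-1) - 1) • R (k+1) := by
        funext ω; simp [smul_eq_mul]
      rw [heq]
      refine (condExp_add (integrable_const 1) ((hRint _ hk1').smul _) (𝔉 k)).trans ?_
      rw [condExp_const (hle k)]
      filter_upwards [condExp_smul (μ := μ) (m := 𝔉 k) (Real.exp (-1) - 1) (R (k+1))] with ω hω
      simp only [Pi.add_apply, hω, Pi.smul_apply, smul_eq_mul]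
    have hmain : μ[((fun ω => Real.exp (∑ j ∈ Finset.Icc 1 k,
        ((1 - Real.exp (-1)) * (μ[R j | 𝔉 (j - 1)]) ω - R j ω))
        * Real.exp ((1 - Real.exp (-1)) * (μ[R (k+1) | 𝔉 k]) ω))
        * (fun ω => Real.exp (-(R (k+1) ω)))) | 𝔉 k] ≤ᵐ[μ]
        fun ω => Real.exp (∑ j ∈ Finset.Icc 1 k,
          ((1 - Real.exp (-1)) * (μ[R j | 𝔉 (j - 1)]) ω - R j ω)) := by
      filter_upwards [hpull, hmono1, hcomp] with ω h1 h2 h3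
      rw [h1, Pi.mul_apply]
      set Zk := Real.exp (∑ j ∈ Finset.Icc 1 k,
        ((1 - Real.exp (-1)) * (μ[R j | 𝔉 (j - 1)]) ω - R j ω)) with hZk
      set E := (μ[R (k+1) | 𝔉 k]) ω with hE
      have hf0 : (0:ℝ) ≤ Zk * Real.exp ((1 - Real.exp (-1)) * E) :=
        (mul_pos (Real.exp_pos _) (Real.exp_pos _)).le
      have step1 : (μ[(fun ω => Real.exp (-(R (k+1) ω))) | 𝔉 k]) ω
          ≤ 1 + (Real.exp (-1) - 1) * E := h2.trans (le_of_eq h3)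
      have step2 : 1 + (Real.exp (-1) - 1) * E ≤ Real.exp ((Real.exp (-1) - 1) * E) := by
        have := Real.add_one_le_exp ((Real.exp (-1) - 1) * E)
        linarith
      calc Zk * Real.exp ((1 - Real.exp (-1)) * E)
            * (μ[(fun ω => Real.exp (-(R (k+1) ω))) | 𝔉 k]) ω
          ≤ Zk * Real.exp ((1 - Real.exp (-1)) * E)
            * Real.exp ((Real.exp (-1) - 1) * E) :=
            mul_le_mul_of_nonneg_left (step1.trans step2) hf0
        _ = Zk := by
            rw [mul_assoc, ← Real.exp_add]
            rw [show (1 - Real.exp (-1)) * E + (Real.exp (-1) - 1) * E = 0 by ring]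
            simp
    calc ∫ ω, Real.exp (∑ j ∈ Finset.Icc 1 (k+1),
          ((1 - Real.exp (-1)) * (μ[R j | 𝔉 (j - 1)]) ω - R j ω)) ∂μ
        = ∫ ω, ((fun ω => Real.exp (∑ j ∈ Finset.Icc 1 k,
            ((1 - Real.exp (-1)) * (μ[R j | 𝔉 (j - 1)]) ω - R j ω))
            * Real.exp ((1 - Real.exp (-1)) * (μ[R (k+1) | 𝔉 k]) ω))
            * (fun ω => Real.exp (-(R (k+1) ω)))) ω ∂μ := by rw [← hsplit]
      _ = ∫ ω, (μ[((fun ω => Real.exp (∑ j ∈ Finset.Icc 1 k,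
            ((1 - Real.exp (-1)) * (μ[R j | 𝔉 (j - 1)]) ω - R j ω))
            * Real.exp ((1 - Real.exp (-1)) * (μ[R (k+1) | 𝔉 k]) ω))
            * (fun ω => Real.exp (-(R (k+1) ω)))) | 𝔉 k]) ω ∂μ :=
          (integral_condExp (hle k)).symm
      _ ≤ ∫ ω, Real.exp (∑ j ∈ Finset.Icc 1 k,
            ((1 - Real.exp (-1)) * (μ[R j | 𝔉 (j - 1)]) ω - R j ω)) ∂μ :=
          integral_mono_ae integrable_condExp (hZint k hk) hmain
      _ ≤ 1 := (ih hk).2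

theorem martingale_multiplicative_bound
    {Ω : Type*} [m0 : MeasurableSpace Ω] (μ : Measure Ω) [IsProbabilityMeasure μ]
    (n : ℕ) (hn : 0 < n) (𝔉 : ℕ → MeasurableSpace Ω)
    (hmono : Monotone 𝔉) (hle : ∀ j, 𝔉 j ≤ m0)
    (R : ℕ → Ω → ℝ)
    (hmeas : ∀ j ∈ Finset.Icc 1 n, Measurable[𝔉 j] (R j))
    (hbd : ∀ j ∈ Finset.Icc 1 n, ∀ ω, 0 ≤ R j ω ∧ R j ω ≤ 1)
    (t : ℝ) (ht : 0 < t) :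
    μ {ω | (1 / n : ℝ) * ∑ j ∈ Finset.Icc 1 n, (μ[R j | 𝔉 (j - 1)]) ω >
        2 * ((1 / n : ℝ) * ∑ j ∈ Finset.Icc 1 n, R j ω) + t} ≤
      ENNReal.ofReal (Real.exp (-(n * t) / Real.exp 1)) := by
  obtain ⟨hint, hle1⟩ := mmb_main μ n 𝔉 hmono hle R hmeas hbd n le_rfl
  have hn' : (0:ℝ) < n := Nat.cast_pos.mpr hn
  have hnt : (0:ℝ) < n * t := mul_pos hn' ht
  -- pointwise: event implies the exponential is large
  have hsub : {ω | (1 / n : ℝ) * ∑ j ∈ Finset.Icc 1 n, (μ[R j | 𝔉 (j - 1)]) ω >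
        2 * ((1 / n : ℝ) * ∑ j ∈ Finset.Icc 1 n, R j ω) + t} ⊆
      {ω | ENNReal.ofReal (Real.exp (n * t / Real.exp 1)) ≤
        ENNReal.ofReal (Real.exp (∑ j ∈ Finset.Icc 1 n,
          ((1 - Real.exp (-1)) * (μ[R j | 𝔉 (j - 1)]) ω - R j ω)))} := by
    intro ω hω
    simp only [Set.mem_setOf_eq] at hω ⊢
    set A := ∑ j ∈ Finset.Icc 1 n, (μ[R j | 𝔉 (j - 1)]) ω with hA
    set B := ∑ j ∈ Finset.Icc 1 n, R j ω with hB
    have hB0 : 0 ≤ B := Finset.sum_nonneg fun j hj => (hbd j hj ω).1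
    have hAgt : A > 2 * B + n * t := by
      have h2 := mul_lt_mul_of_pos_left hω hn'
      have e1 : (n:ℝ) * ((1/n) * A) = A := by field_simp
      have e2 : (n:ℝ) * (2 * ((1/n) * B) + t) = 2 * B + n * t := by field_simp
      rw [e1, e2] at h2
      exact h2
    have hei : Real.exp (-1) ≤ 1/2 := mmb_ei_le_half
    have hei0 : 0 ≤ Real.exp (-1) := (Real.exp_pos _).le
    have hS : ∑ j ∈ Finset.Icc 1 n,
        ((1 - Real.exp (-1)) * (μ[R j | 𝔉 (j - 1)]) ω - R j ω)
        = (1 - Real.exp (-1)) * A - B := by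
      rw [hA, hB, Finset.mul_sum, ← Finset.sum_sub_distrib]
    apply ENNReal.ofReal_le_ofReal
    rw [Real.exp_le_exp, hS]
    have hdiv : n * t / Real.exp 1 = n * t * Real.exp (-1) := by
      rw [Real.exp_neg, div_eq_mul_inv]
    rw [hdiv]
    nlinarith [hAgt, hB0, hei, hei0, hnt]
  have hZ0 : ∀ ω, 0 ≤ Real.exp (∑ j ∈ Finset.Icc 1 n,
      ((1 - Real.exp (-1)) * (μ[R j | 𝔉 (j - 1)]) ω - R j ω)) :=
    fun ω => (Real.exp_pos _).le
  have hlin : ∫⁻ ω, ENNReal.ofReal (Real.exp (∑ j ∈ Finset.Icc 1 n,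
      ((1 - Real.exp (-1)) * (μ[R j | 𝔉 (j - 1)]) ω - R j ω))) ∂μ ≤ 1 := by
    rw [← ofReal_integral_eq_lintegral_ofReal hint (ae_of_all _ hZ0)]
    calc ENNReal.ofReal (∫ ω, Real.exp (∑ j ∈ Finset.Icc 1 n,
          ((1 - Real.exp (-1)) * (μ[R j | 𝔉 (j - 1)]) ω - R j ω)) ∂μ)
        ≤ ENNReal.ofReal 1 := ENNReal.ofReal_le_ofReal hle1
      _ = 1 := ENNReal.ofReal_one
  have hmar := mul_meas_ge_le_lintegral₀
    (f := fun ω => ENNReal.ofReal (Real.exp (∑ j ∈ Finset.Icc 1 n,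
      ((1 - Real.exp (-1)) * (μ[R j | 𝔉 (j - 1)]) ω - R j ω))))
    (μ := μ)
    (ENNReal.measurable_ofReal.comp (Measurable.exp (Finset.measurable_sum _ fun j hj =>
      ((measurable_const.mul ((stronglyMeasurable_condExp.measurable).mono (hle _) le_rfl)).sub
        ((hmeas j hj).mono (hle j) le_rfl))))).aemeasurable
    (ENNReal.ofReal (Real.exp (n * t / Real.exp 1)))
  have hε0 : ENNReal.ofReal (Real.exp (n * t / Real.exp 1)) ≠ 0 := by
    simp [ENNReal.ofReal_eq_zero, not_le, Real.exp_pos]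
  have hεtop : ENNReal.ofReal (Real.exp (n * t / Real.exp 1)) ≠ ⊤ := ENNReal.ofReal_ne_top
  calc μ {ω | (1 / n : ℝ) * ∑ j ∈ Finset.Icc 1 n, (μ[R j | 𝔉 (j - 1)]) ω >
        2 * ((1 / n : ℝ) * ∑ j ∈ Finset.Icc 1 n, R j ω) + t}
      ≤ μ {ω | ENNReal.ofReal (Real.exp (n * t / Real.exp 1)) ≤
          ENNReal.ofReal (Real.exp (∑ j ∈ Finset.Icc 1 n,
            ((1 - Real.exp (-1)) * (μ[R j | 𝔉 (j - 1)]) ω - R j ω)))} := measure_mono hsub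
    _ ≤ 1 / ENNReal.ofReal (Real.exp (n * t / Real.exp 1)) := by
        rw [ENNReal.le_div_iff_mul_le (Or.inl hε0) (Or.inl hεtop), mul_comm]
        exact hmar.trans hlin
    _ = ENNReal.ofReal (Real.exp (-(n * t) / Real.exp 1)) := by
        rw [one_div, neg_div, Real.exp_neg]
        exact (ENNReal.ofReal_inv_of_pos (Real.exp_pos _)).symm
end

section
/- Let R_1, ..., R_n be real random variables with 0 ≤ R_j ≤ 1, adapted to a filtration (σ_j), V̂ = (1/n) Σ_j R_j and V = (1/n) Σ_j E[R_j | σ_{j-1}]. Then for any δ > 0, Pr{V > 2V̂ + e·ln(1/δ)/n} ≤ δ. -/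
open MeasureTheory Finset

lemma aux_numeric : (Real.exp 1)⁻¹ ≤ 1 - Real.exp (-(2 * (Real.exp 1)⁻¹)) := by
  set a : ℝ := (Real.exp 1)⁻¹ with ha
  have hapos : 0 < a := inv_pos.2 (Real.exp_pos 1)
  have hhalf : a ≤ 1/2 := by
    rw [ha, inv_le_comm₀ (Real.exp_pos 1) (by norm_num)]
    calc (1/2:ℝ)⁻¹ = 2 := by norm_num
    _ ≤ Real.exp 1 := by linarith [Real.add_one_le_exp 1]
  have h1 : Real.exp (-(2*a)) * (1 + 2*a) ≤ 1 := by
    have h2 : 1 + 2*a ≤ Real.exp (2*a) := by linarith [Real.add_one_le_exp (2*a)]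
    have h3 := mul_le_mul_of_nonneg_left h2 (Real.exp_pos (-(2*a))).le
    rwa [← Real.exp_add, neg_add_cancel, Real.exp_zero] at h3
  nlinarith [Real.exp_pos (-(2*a)), mul_nonneg hapos.le (by linarith : (0:ℝ) ≤ 1 - 2*a)]

lemma aux_convex (b x : ℝ) (hx0 : 0 ≤ x) (hx1 : x ≤ 1) :
    Real.exp (-b * x) ≤ 1 - (1 - Real.exp (-b)) * x := by
  have h := convexOn_exp.2 (Set.mem_univ (0:ℝ)) (Set.mem_univ (-b))
    (by linarith : (0:ℝ) ≤ 1 - x) hx0 (by ring)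
  simp only [smul_eq_mul, mul_zero, zero_add, Real.exp_zero, mul_one] at h
  calc Real.exp (-b * x) = Real.exp (x * -b) := by ring_nf
  _ ≤ (1-x) + x * Real.exp (-b) := h
  _ = 1 - (1 - Real.exp (-b)) * x := by ring

theorem martingale_multiplicative_bound_delta
    {Ω : Type*} [m0 : MeasurableSpace Ω] (μ : Measure Ω) [IsProbabilityMeasure μ]
    (n : ℕ) (hn : 0 < n) (𝔉 : ℕ → MeasurableSpace Ω)
    (hmono : Monotone 𝔉) (hle : ∀ j, 𝔉 j ≤ m0)
    (R : ℕ → Ω → ℝ)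
    (hmeas : ∀ j ∈ Finset.Icc 1 n, Measurable[𝔉 j] (R j))
    (hbd : ∀ j ∈ Finset.Icc 1 n, ∀ ω, 0 ≤ R j ω ∧ R j ω ≤ 1)
    (δ : ℝ) (hδ : 0 < δ) :
    μ {ω | (1 / n : ℝ) * ∑ j ∈ Finset.Icc 1 n, (μ[R j | 𝔉 (j - 1)]) ω >
        2 * ((1 / n : ℝ) * ∑ j ∈ Finset.Icc 1 n, R j ω) +
          Real.exp 1 * Real.log (1 / δ) / n} ≤ ENNReal.ofReal δ := by
  classical
  set a : ℝ := (Real.exp 1)⁻¹ with ha_def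
  have hapos : 0 < a := inv_pos.2 (Real.exp_pos 1)
  have hae : a * Real.exp 1 = 1 := inv_mul_cancel₀ (Real.exp_pos 1).ne'
  have hkey : a ≤ 1 - Real.exp (-(2*a)) := aux_numeric
  set c : ℝ := 1 - Real.exp (-(2*a)) with hc_def
  set Y : ℕ → Ω → ℝ := fun j => μ[R j | 𝔉 (j-1)] with hY_def
  set F : ℕ → Ω → ℝ := fun k ω => ∏ j ∈ Icc 1 k, Real.exp (a * Y j ω - 2*a*R j ω) with hF_def
  -- basic facts about R
  have hRm : ∀ j ∈ Icc 1 n, Measurable (R j) := fun j hj =>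
    (hmeas j hj).mono (hle j) le_rfl
  have hRint : ∀ j ∈ Icc 1 n, Integrable (R j) μ := by
    intro j hj
    refine Integrable.mono' (integrable_const 1) (hRm j hj).aestronglyMeasurable
      (ae_of_all _ fun ω => ?_)
    rw [Real.norm_eq_abs, abs_le]
    constructor <;> linarith [(hbd j hj ω).1, (hbd j hj ω).2]
  have hY0 : ∀ j ∈ Icc 1 n, 0 ≤ᵐ[μ] Y j := fun j hj =>
    condExp_nonneg (ae_of_all _ fun ω => (hbd j hj ω).1)
  have hY1 : ∀ j ∈ Icc 1 n, Y j ≤ᵐ[μ] fun _ => 1 := by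
    intro j hj
    have h := condExp_mono (m := 𝔉 (j-1)) (hRint j hj) (integrable_const (1:ℝ))
      (ae_of_all _ fun ω => (hbd j hj ω).2)
    rwa [condExp_const (hle _)] at h
  -- measurability of F k
  have hYm : ∀ j, Measurable[𝔉 (j-1)] (Y j) := fun j =>
    stronglyMeasurable_condExp.measurable
  have hFmeas : ∀ k, k ≤ n → Measurable[𝔉 k] (F k) := by
    intro k hk
    refine Finset.measurable_prod _ fun j hj => ?_
    rw [Finset.mem_Icc] at hj
    have h1 : Measurable[𝔉 k] (Y j) := ((hYm j).mono (hmono (by omega)) le_rfl)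
    have h2 : Measurable[𝔉 k] (R j) :=
      (hmeas j (Finset.mem_Icc.2 ⟨hj.1, hj.2.trans hk⟩)).mono (hmono hj.2) le_rfl
    exact Real.measurable_exp.comp ((measurable_const.mul h1).sub (measurable_const.mul h2))
  -- a.e. bound on F
  have hYbd : ∀ᵐ ω ∂μ, ∀ j ∈ Icc 1 n, 0 ≤ Y j ω ∧ Y j ω ≤ 1 := by
    have h := (ae_ball_iff (Finset.countable_toSet (Icc 1 n))).2
      (fun j (hj : j ∈ (Icc 1 n : Finset ℕ)) => (hY0 j hj).and (hY1 j hj))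
    filter_upwards [h] with ω hω j hj using hω j hj
  have hFbd : ∀ᵐ ω ∂μ, ∀ k, k ≤ n → 0 ≤ F k ω ∧ F k ω ≤ Real.exp (a*k) := by
    filter_upwards [hYbd] with ω hω
    intro k hk
    constructor
    · exact Finset.prod_nonneg fun j _ => (Real.exp_pos _).le
    · calc F k ω ≤ ∏ _j ∈ Icc 1 k, Real.exp a := by
            refine Finset.prod_le_prod (fun j _ => (Real.exp_pos _).le) fun j hj => ?_
            rw [Finset.mem_Icc] at hj
            have hjn : j ∈ Icc 1 n := Finset.mem_Icc.2 ⟨hj.1, hj.2.trans hk⟩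
            have := (hω j hjn).2
            have hR := (hbd j hjn ω).1
            exact Real.exp_le_exp.2 (by nlinarith)
        _ = Real.exp a ^ k := by rw [Finset.prod_const, Nat.card_Icc]; norm_num
        _ = Real.exp (a*k) := by rw [mul_comm, Real.exp_nat_mul]
  have hFint : ∀ k, k ≤ n → Integrable (F k) μ := by
    intro k hk
    refine Integrable.mono' (integrable_const (Real.exp (a*k)))
      (((hFmeas k hk).mono (hle k) le_rfl).aestronglyMeasurable) ?_
    filter_upwards [hFbd] with ω hω
    rw [Real.norm_eq_abs, abs_of_nonneg (hω k hk).1]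
    exact (hω k hk).2
  -- main induction
  have main : ∀ k, k ≤ n → ∫ ω, F k ω ∂μ ≤ 1 := by
    intro k
    induction k with
    | zero =>
      intro _
      simp only [hF_def, Finset.Icc_eq_empty (by omega : ¬(1:ℕ) ≤ 0), Finset.prod_empty]
      simp
    | succ k ih =>
      intro hk1
      have hk : k ≤ n := Nat.le_of_succ_le hk1
      have hjn : k+1 ∈ Icc 1 n := Finset.mem_Icc.2 ⟨by omega, hk1⟩
      set g : Ω → ℝ := fun ω => Real.exp (a * Y (k+1) ω - 2*a*R (k+1) ω) with hg_def
      have hFsucc : F (k+1) = fun ω => F k ω * g ω := by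
        funext ω
        simp only [hF_def, hg_def]
        rw [Finset.prod_Icc_succ_top (by omega : 1 ≤ k+1)]
      -- factor g = e1 * h2
      set e1 : Ω → ℝ := fun ω => Real.exp (a * Y (k+1) ω) with he1_def
      set h2 : Ω → ℝ := fun ω => Real.exp (-(2*a) * R (k+1) ω) with hh2_def
      have hg_eq : g = fun ω => e1 ω * h2 ω := by
        funext ω; simp only [hg_def, he1_def, hh2_def]
        rw [← Real.exp_add]; ring_nf
      have hYk1 : Measurable[𝔉 k] (Y (k+1)) := by
        have := hYm (k+1); simpa using this
      have he1sm : StronglyMeasurable[𝔉 k] e1 :=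
        (Real.measurable_exp.comp (measurable_const.mul hYk1)).stronglyMeasurable
      have hRm1 : Measurable (R (k+1)) := hRm _ hjn
      have hh2m : Measurable h2 :=
        Real.measurable_exp.comp (measurable_const.mul hRm1)
      have hh2bd : ∀ ω, 0 ≤ h2 ω ∧ h2 ω ≤ 1 := by
        intro ω
        refine ⟨(Real.exp_pos _).le, ?_⟩
        rw [← Real.exp_zero]
        apply Real.exp_le_exp.2
        have := (hbd _ hjn ω).1
        nlinarith
      have hh2int : Integrable h2 μ := by
        refine Integrable.mono' (integrable_const 1) hh2m.aestronglyMeasurable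
          (ae_of_all _ fun ω => ?_)
        rw [Real.norm_eq_abs, abs_of_nonneg (hh2bd ω).1]
        exact (hh2bd ω).2
      -- conditional expectation of h2
      have hconv : h2 ≤ᵐ[μ] fun ω => 1 - c * R (k+1) ω :=
        ae_of_all _ fun ω => aux_convex (2*a) (R (k+1) ω) (hbd _ hjn ω).1 (hbd _ hjn ω).2
      have hlin_int : Integrable (fun ω => 1 - c * R (k+1) ω) μ :=
        (integrable_const 1).sub ((hRint _ hjn).const_mul c)
      have hcond_lin : μ[(fun ω => 1 - c * R (k+1) ω) | 𝔉 k] =ᵐ[μ]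
          fun ω => 1 - c * Y (k+1) ω := by
        have heq : (fun ω => 1 - c * R (k+1) ω) = (fun _ => (1:ℝ)) - c • (R (k+1)) := by
          funext ω; simp [smul_eq_mul]
        rw [heq]
        refine (condExp_sub (integrable_const 1) ((hRint _ hjn).smul c) _).trans ?_
        have h1 := condExp_const (μ := μ) (hle k) (1:ℝ)
        have h2' := condExp_smul (μ := μ) (m := 𝔉 k) c (R (k+1))
        filter_upwards [h2'] with ω hω
        simp only [Pi.sub_apply, Pi.smul_apply, smul_eq_mul, h1, hω]
        have : Y (k+1) = μ[R (k+1) | 𝔉 k] := by simp [hY_def]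
        rw [this]
      have hcondh2 : μ[h2 | 𝔉 k] ≤ᵐ[μ] fun ω => 1 - c * Y (k+1) ω :=
        (condExp_mono hh2int hlin_int hconv).trans hcond_lin.le
      -- integrability of g
      have hYm1 : Measurable (Y (k+1)) := (hYm (k+1)).mono (hle _) le_rfl
      have hgm : Measurable g := by
        rw [hg_eq]
        exact (Real.measurable_exp.comp (measurable_const.mul ((hYk1.mono (hle k) le_rfl)))).mul hh2m
      have hgint : Integrable g μ := by
        refine Integrable.mono' (integrable_const (Real.exp a)) hgm.aestronglyMeasurable ?_
        filter_upwards [hY1 _ hjn, hY0 _ hjn] with ω h1 h0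
        rw [hg_def, Real.norm_eq_abs, abs_of_nonneg (Real.exp_pos _).le]
        apply Real.exp_le_exp.2
        have hR := (hbd _ hjn ω).1
        nlinarith
      -- pull out e1
      have hpullg : μ[g | 𝔉 k] =ᵐ[μ] e1 * μ[h2 | 𝔉 k] := by
        have : g = e1 * h2 := by funext ω; exact congrFun hg_eq ω
        rw [this]
        refine condExp_mul_of_stronglyMeasurable_left he1sm ?_ hh2int
        rw [← this]; exact hgint
      -- μ[g|𝔉 k] ≤ 1 a.e.
      have hgcond : μ[g | 𝔉 k] ≤ᵐ[μ] fun _ => 1 := by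
        filter_upwards [hpullg, hcondh2, hY0 _ hjn, hY1 _ hjn] with ω h1 h2' h0 hone
        rw [h1]
        simp only [Pi.mul_apply]
        have he1pos : 0 < e1 ω := Real.exp_pos _
        have step1 : e1 ω * (μ[h2|𝔉 k]) ω ≤ e1 ω * (1 - c * Y (k+1) ω) :=
          mul_le_mul_of_nonneg_left h2' he1pos.le
        have step2 : 1 - c * Y (k+1) ω ≤ Real.exp (-(a * Y (k+1) ω)) := by
          have hx : 1 + (-(c * Y (k+1) ω)) ≤ Real.exp (-(c * Y (k+1) ω)) := by
            linarith [Real.add_one_le_exp (-(c * Y (k+1) ω))]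
          have : Real.exp (-(c * Y (k+1) ω)) ≤ Real.exp (-(a * Y (k+1) ω)) := by
            apply Real.exp_le_exp.2
            have : a * Y (k+1) ω ≤ c * Y (k+1) ω := mul_le_mul_of_nonneg_right hkey h0
            linarith
          linarith
        have step3 : e1 ω * (1 - c * Y (k+1) ω) ≤ e1 ω * Real.exp (-(a * Y (k+1) ω)) :=
          mul_le_mul_of_nonneg_left step2 he1pos.le
        have step4 : e1 ω * Real.exp (-(a * Y (k+1) ω)) = 1 := by
          rw [he1_def, ← Real.exp_add]
          simp
        linarith
      -- pull out F k
      have hFk1int : Integrable (F k * g) μ := by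
        have h := hFint (k+1) hk1
        rw [hFsucc] at h
        exact h
      have hpull : μ[F (k+1) | 𝔉 k] =ᵐ[μ] F k * μ[g | 𝔉 k] := by
        have heq : F (k+1) = F k * g := by funext ω; exact congrFun hFsucc ω
        rw [heq]
        exact condExp_mul_of_stronglyMeasurable_left (hFmeas k hk).stronglyMeasurable hFk1int hgint
      have hstep : ∫ ω, F (k+1) ω ∂μ ≤ ∫ ω, F k ω ∂μ := by
        have e_int : ∫ ω, F (k+1) ω ∂μ = ∫ ω, (μ[F (k+1) | 𝔉 k]) ω ∂μ :=
          (integral_condExp (hle k)).symm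
        rw [e_int]
        refine integral_mono_ae integrable_condExp (hFint k hk) ?_
        filter_upwards [hpull, hgcond, hFbd] with ω h1 h2' h3
        rw [h1]
        simp only [Pi.mul_apply]
        exact mul_le_of_le_one_right (h3 k hk).1 h2'
      exact le_trans hstep (ih hk)
  -- final Markov step
  have hFn_int := hFint n le_rfl
  have hFn_nonneg : 0 ≤ᵐ[μ] F n := ae_of_all _ fun ω =>
    Finset.prod_nonneg fun j _ => (Real.exp_pos _).le
  have hsub : {ω | (1 / n : ℝ) * ∑ j ∈ Finset.Icc 1 n, (μ[R j | 𝔉 (j - 1)]) ω >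
        2 * ((1 / n : ℝ) * ∑ j ∈ Finset.Icc 1 n, R j ω) +
          Real.exp 1 * Real.log (1 / δ) / n} ⊆ {ω | 1/δ ≤ F n ω} := by
    intro ω hω
    simp only [Set.mem_setOf_eq] at hω ⊢
    set S := ∑ j ∈ Icc 1 n, Y j ω with hS
    set T := ∑ j ∈ Icc 1 n, R j ω with hT
    have hn' : (0:ℝ) < n := Nat.cast_pos.2 hn
    have hω' : 2 * ((1/(n:ℝ)) * T) + Real.exp 1 * Real.log (1/δ) / n < (1/(n:ℝ)) * S := hω
    have h1 : Real.exp 1 * Real.log (1/δ) < S - 2*T := by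
      have e1 : (1/(n:ℝ)) * S = S / n := one_div_mul_eq_div _ _
      have e2 : (1/(n:ℝ)) * T = T / n := one_div_mul_eq_div _ _
      rw [e1, e2] at hω'
      have h2 : (Real.exp 1 * Real.log (1/δ))/n < (S - 2*T)/n := by
        rw [sub_div]
        have : 2*(T/n) = 2*T/n := by ring
        linarith [hω', this]
      exact (div_lt_div_iff_of_pos_right hn').1 h2
    have hFn : F n ω = Real.exp (a * (S - 2*T)) := by
      simp only [hF_def, ← Real.exp_sum]
      congr 1
      rw [Finset.sum_sub_distrib, ← Finset.mul_sum, ← Finset.mul_sum, ← hS, ← hT]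
      ring
    rw [hFn]
    have h3 : Real.log (1/δ) < a * (S - 2*T) := by
      calc Real.log (1/δ) = a * (Real.exp 1 * Real.log (1/δ)) := by
            rw [← mul_assoc, hae, one_mul]
      _ < a * (S - 2*T) := mul_lt_mul_of_pos_left h1 hapos
    calc 1/δ = Real.exp (Real.log (1/δ)) := (Real.exp_log (by positivity)).symm
    _ ≤ Real.exp (a*(S-2*T)) := Real.exp_le_exp.2 h3.le
  have hmark := mul_meas_ge_le_integral_of_nonneg hFn_nonneg hFn_int (1/δ)
  have hfin : μ {x | 1/δ ≤ F n x} ≠ ⊤ := measure_ne_top μ _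
  have hTle : (μ {x | 1/δ ≤ F n x}).toReal ≤ δ := by
    have h4 : (1/δ) * (μ {x | 1/δ ≤ F n x}).toReal ≤ 1 := le_trans hmark (main n le_rfl)
    have h5 : 0 ≤ (μ {x | 1/δ ≤ F n x}).toReal := ENNReal.toReal_nonneg
    have hinv : (1/δ) * δ = 1 := by field_simp
    nlinarith
  refine le_trans (measure_mono hsub) ?_
  calc μ {x | 1/δ ≤ F n x} = ENNReal.ofReal (μ {x | 1/δ ≤ F n x}).toReal :=
        (ENNReal.ofReal_toReal hfin).symm
  _ ≤ ENNReal.ofReal δ := ENNReal.ofReal_le_ofReal hTle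
end

section
/- Let f be a nonnegative differentiable function on a convex open subset O of a Hilbert space, and suppose that for some γ > 0 and all x, y ∈ O, ‖f'(y) − f'(x)‖ ≤ γ‖y − x‖. Then for all x ∈ O, ‖f'(x)‖ ≤ √(2γ f(x)). -/
theorem grad_le_sqrt_of_smooth_nonneg
    {H : Type*} [NormedAddCommGroup H] [InnerProductSpace ℝ H] [CompleteSpace H]
    (f : H → ℝ) (f' : H → H) (γ : ℝ) (hγ : 0 < γ)
    (hgrad : ∀ x, HasGradientAt f (f' x) x)
    (hnonneg : ∀ x, 0 ≤ f x)
    (hsmooth : ∀ x y, ‖f' y - f' x‖ ≤ γ * ‖y - x‖) :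
    ∀ x, ‖f' x‖ ≤ Real.sqrt (2 * γ * f x) := by
  -- Descent lemma
  have descent : ∀ x v : H, f (x + v) ≤ f x + inner ℝ (f' x) v + γ / 2 * ‖v‖ ^ 2 := by
    intro x v
    set φ : ℝ → ℝ := fun t => f (x + t • v) - t * inner ℝ (f' x) v - γ / 2 * t ^ 2 * ‖v‖ ^ 2
      with hφ
    have hder : ∀ t : ℝ, HasDerivAt φ
        ((inner ℝ (f' (x + t • v)) v : ℝ) - inner ℝ (f' x) v - γ * t * ‖v‖ ^ 2) t := by
      intro t
      have hc : HasDerivAt (fun t : ℝ => x + t • v) v t := by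
        simpa using ((hasDerivAt_id t).smul_const v).const_add x
      have h1 : HasDerivAt (fun t : ℝ => f (x + t • v))
          ((inner ℝ (f' (x + t • v)) v : ℝ)) t := by
        have := ((hgrad (x + t • v)).hasFDerivAt.comp_hasDerivAt t hc)
        exact this
      have h2 : HasDerivAt (fun t : ℝ => t * (inner ℝ (f' x) v : ℝ))
          (inner ℝ (f' x) v : ℝ) t := by
        simpa using (hasDerivAt_id t).mul_const (inner ℝ (f' x) v : ℝ)
      have h3 : HasDerivAt (fun t : ℝ => γ / 2 * t ^ 2 * ‖v‖ ^ 2)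
          (γ * t * ‖v‖ ^ 2) t := by
        have := ((hasDerivAt_pow 2 t).const_mul (γ / 2)).mul_const (‖v‖ ^ 2)
        refine this.congr_deriv ?_
        ring
      exact (h1.sub h2).sub h3
    have hmono : AntitoneOn φ (Set.Icc 0 1) := by
      apply antitoneOn_of_deriv_nonpos (convex_Icc 0 1)
      · exact Continuous.continuousOn (by
          have : Continuous φ := by
            have : Differentiable ℝ φ := fun t => (hder t).differentiableAt
            exact this.continuous
          exact this)
      · intro t ht
        exact (hder t).differentiableAt.differentiableWithinAt
      · intro t ht
        rw [interior_Icc] at ht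
        rw [(hder t).deriv]
        have hb : (inner ℝ (f' (x + t • v)) v : ℝ) - inner ℝ (f' x) v ≤ γ * t * ‖v‖ ^ 2 := by
          have h1 : (inner ℝ (f' (x + t • v)) v : ℝ) - inner ℝ (f' x) v
              = inner ℝ (f' (x + t • v) - f' x) v := by
            rw [inner_sub_left]
          rw [h1]
          calc (inner ℝ (f' (x + t • v) - f' x) v : ℝ)
              ≤ ‖f' (x + t • v) - f' x‖ * ‖v‖ := real_inner_le_norm _ _
            _ ≤ γ * ‖(x + t • v) - x‖ * ‖v‖ := by
                have := hsmooth x (x + t • v)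
                nlinarith [norm_nonneg v]
            _ = γ * t * ‖v‖ ^ 2 := by
                rw [add_sub_cancel_left, norm_smul, Real.norm_eq_abs,
                  abs_of_pos ht.1]
                ring
        linarith
    have h01 := hmono (Set.left_mem_Icc.2 zero_le_one) (Set.right_mem_Icc.2 zero_le_one)
      zero_le_one
    simp only [hφ, zero_smul, add_zero, one_smul, zero_mul, zero_pow, mul_zero,
      sub_zero, one_pow, mul_one, one_mul] at h01
    linarith
  intro x
  have key : ‖f' x‖ ^ 2 ≤ 2 * γ * f x := by
    have h := descent x (-(γ⁻¹ • f' x))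
    have h0 := hnonneg (x + -(γ⁻¹ • f' x))
    have hinner : (inner ℝ (f' x) (-(γ⁻¹ • f' x)) : ℝ) = -(γ⁻¹ * ‖f' x‖ ^ 2) := by
      rw [inner_neg_right, inner_smul_right, real_inner_self_eq_norm_sq]
    have hnorm : ‖-(γ⁻¹ • f' x)‖ ^ 2 = γ⁻¹ ^ 2 * ‖f' x‖ ^ 2 := by
      rw [norm_neg, norm_smul, Real.norm_eq_abs, abs_of_pos (inv_pos.2 hγ)]
      ring
    rw [hinner, hnorm] at h
    have hγ' : γ ≠ 0 := ne_of_gt hγ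
    have : f x - γ⁻¹ * ‖f' x‖ ^ 2 + γ / 2 * (γ⁻¹ ^ 2 * ‖f' x‖ ^ 2)
        = f x - ‖f' x‖ ^ 2 / (2 * γ) := by
      field_simp
      ring
    have h2 : ‖f' x‖ ^ 2 / (2 * γ) ≤ f x := by linarith
    have h3 := (div_le_iff₀ (by positivity : (0:ℝ) < 2 * γ)).1 h2
    nlinarith [h3]
  calc ‖f' x‖ = Real.sqrt (‖f' x‖ ^ 2) := by rw [Real.sqrt_sq (norm_nonneg _)]
    _ ≤ Real.sqrt (2 * γ * f x) := Real.sqrt_le_sqrt key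
end

section
/- Let X be a random variable with values in a metric space, X_1,...,X_n a (possibly dependent) sample, F the class of all nonnegative L-Lipschitz functions, and t > 0. Conditionally on the sample, sup_{f ∈ F} Pr{f(X) > max_i f(X_i) + t | X_1,...,X_n} = Pr{min_{i=1}^n d(X, X_i) > t/L | X_1,...,X_n}. -/
open MeasureTheory

theorem sup_lipschitz_exceedance_prob {Ω S : Type*} [MeasurableSpace Ω]
    [MetricSpace S] [MeasurableSpace S] [BorelSpace S]
    (μ : Measure Ω) [IsProbabilityMeasure μ]
    (X : Ω → S) (hX : Measurable X)
    (n : ℕ) (hn : n ≠ 0) (Xs : Fin n → S) (L t : ℝ) (hL : 0 < L) (ht : 0 < t) :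
    (⨆ f : {f : S → ℝ // (∀ y, 0 ≤ f y) ∧ ∀ y z : S, |f y - f z| ≤ L * dist y z},
        μ {ω | (f : S → ℝ) (X ω) >
          Finset.univ.sup' ⟨⟨0, Nat.pos_of_ne_zero hn⟩, Finset.mem_univ _⟩
            (fun i => (f : S → ℝ) (Xs i)) + t}) =
      μ {ω | Finset.univ.inf' ⟨⟨0, Nat.pos_of_ne_zero hn⟩, Finset.mem_univ _⟩
          (fun i => dist (X ω) (Xs i)) > t / L} := by
  have ne : (Finset.univ : Finset (Fin n)).Nonempty :=
    ⟨⟨0, Nat.pos_of_ne_zero hn⟩, Finset.mem_univ _⟩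
  apply le_antisymm
  · apply iSup_le
    intro f
    apply measure_mono
    intro ω hω
    simp only [Set.mem_setOf_eq] at hω ⊢
    rw [gt_iff_lt]
    refine (Finset.lt_inf'_iff _).2 ?_
    intro i _
    have h1 : (f : S → ℝ) (Xs i) ≤ Finset.univ.sup' ne (fun i => (f : S → ℝ) (Xs i)) :=
      Finset.le_sup' (fun i => (f : S → ℝ) (Xs i)) (Finset.mem_univ i)
    have h2 := f.2.2 (X ω) (Xs i)
    rw [abs_le] at h2
    rw [div_lt_iff₀ hL]
    nlinarith [h2.2]
  · set g : S → ℝ := fun y => L * Finset.univ.inf' ne (fun i => dist y (Xs i)) with hg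
    have hinf_nonneg : ∀ y : S, 0 ≤ Finset.univ.inf' ne (fun i => dist y (Xs i)) := by
      intro y
      rw [Finset.le_inf'_iff]
      exact fun i _ => dist_nonneg
    have key : ∀ y z : S, Finset.univ.inf' ne (fun i => dist y (Xs i)) ≤
        Finset.univ.inf' ne (fun i => dist z (Xs i)) + dist y z := by
      intro y z
      obtain ⟨i, _, hi⟩ := Finset.exists_mem_eq_inf' ne (fun i => dist z (Xs i))
      calc Finset.univ.inf' ne (fun i => dist y (Xs i)) ≤ dist y (Xs i) :=
            Finset.inf'_le _ (Finset.mem_univ i)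
        _ ≤ dist y z + dist z (Xs i) := dist_triangle _ _ _
        _ = Finset.univ.inf' ne (fun i => dist z (Xs i)) + dist y z := by rw [hi]; ring
    have hmem : (∀ y, 0 ≤ g y) ∧ ∀ y z : S, |g y - g z| ≤ L * dist y z := by
      constructor
      · intro y
        exact mul_nonneg hL.le (hinf_nonneg y)
      · intro y z
        rw [hg]
        simp only
        rw [← mul_sub, abs_mul, abs_of_pos hL]
        apply mul_le_mul_of_nonneg_left _ hL.le
        rw [abs_le]
        constructor
        · have := key z y
          rw [dist_comm z y] at this
          linarith
        · have := key y z
          linarith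
    have hgXs : ∀ j : Fin n, g (Xs j) = 0 := by
      intro j
      have h1 : Finset.univ.inf' ne (fun i => dist (Xs j) (Xs i)) ≤ 0 := by
        have := Finset.inf'_le (fun i => dist (Xs j) (Xs i)) (Finset.mem_univ j)
        simp only [dist_self] at this; exact this
      have h2 := hinf_nonneg (Xs j)
      rw [hg]
      simp only
      rw [le_antisymm h1 h2, mul_zero]
    refine le_trans (le_of_eq ?_) (le_iSup _ (⟨g, hmem⟩ :
      {f : S → ℝ // (∀ y, 0 ≤ f y) ∧ ∀ y z : S, |f y - f z| ≤ L * dist y z}))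
    congr 1
    ext ω
    simp only [Set.mem_setOf_eq]
    have hsup : Finset.univ.sup' ne (fun i => g (Xs i)) = 0 := by
      rw [show (fun i => g (Xs i)) = fun _ : Fin n => (0:ℝ) from funext hgXs,
        Finset.sup'_const]
    constructor
    · intro h
      rw [hsup, zero_add, hg]
      simp only [gt_iff_lt]
      rw [gt_iff_lt, div_lt_iff₀ hL, mul_comm] at h
      linarith
    · intro h
      rw [hsup, zero_add] at h
      rw [hg] at h
      simp only [gt_iff_lt] at h
      rw [gt_iff_lt, div_lt_iff₀ hL, mul_comm]
      linarith
end
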